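/- Let R be a Noetherian regular local ring of prime characteristic p > 0 satisfying condition (*), and let a be an ideal of R. If c > 0 is an F-jumping coefficient of a, then pc is also an F-jumping coefficient of a. -/

import Mathlib

/-- The `q`-th bracket power of an ideal: the ideal generated by the `q`-th powers
of the elements of `J`. -/
def bracketPow {R : Type*} [CommRing R] (J : Ideal R) (q : ℕ) : Ideal R :=
  Ideal.span ((fun x => x ^ q) '' (J : Set R))

/-- `Ie p a e` is the intersection of all ideals `I` with `a ⊆ I^{[p^e]}`. -/
def Ie {R : Type*} [CommRing R] (p : ℕ) (a : Ideal R) (e : ℕ) : Ideal R :=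
  sInf {I : Ideal R | a ≤ bracketPow I (p ^ e)}

/-- Condition (*): `a ⊆ I_e(a)^{[p^e]}` for every ideal `a` and every `e ≥ 1`. -/
def CondStar (R : Type*) [CommRing R] (p : ℕ) : Prop :=
  ∀ (a : Ideal R) (e : ℕ), 1 ≤ e → a ≤ bracketPow (Ie p a e) (p ^ e)

/-- The generalized test ideal `τ(a^c)`: the supremum, in the lattice of ideals of `R`,
of the ideals `I_e(a^{⌈c p^e⌉})` for `e ≥ 1`. -/
noncomputable def tau {R : Type*} [CommRing R] (p : ℕ) (a : Ideal R) (c : ℝ) : Ideal R :=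
  ⨆ e : {e : ℕ // 1 ≤ e}, Ie p (a ^ ⌈c * (p : ℝ) ^ (e : ℕ)⌉₊) (e : ℕ)

/-- `c > 0` is an F-jumping coefficient of `a` if `τ(a^c) ≠ τ(a^{c-ε})` for all
`0 < ε < c`. -/
def IsFJumpingCoeff {R : Type*} [CommRing R] (p : ℕ) (a : Ideal R) (c : ℝ) : Prop :=
  0 < c ∧ ∀ ε : ℝ, 0 < ε → ε < c → tau p a c ≠ tau p a (c - ε)

/-- `x` is an accumulation point of `S ⊆ ℝ`. -/
def IsAccumulationPt (S : Set ℝ) (x : ℝ) : Prop :=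
  ∀ ε : ℝ, 0 < ε → ∃ y ∈ S, y ≠ x ∧ |y - x| < ε

/-- `R` is a regular local ring: Noetherian, local, and the maximal ideal is generated
by `dim R` elements. -/
def IsRegularStmt (R : Type*) [CommRing R] [IsLocalRing R] : Prop :=
  ∃ s : Finset R, IsLocalRing.maximalIdeal R = Ideal.span (s : Set R) ∧
    (s.card : WithBot (WithTop ℕ)) = ringKrullDim R

section Aux
variable {R : Type*} [CommRing R]

lemma bracketPow_mono {I J : Ideal R} (h : I ≤ J) (q : ℕ) : bracketPow I q ≤ bracketPow J q :=
  Ideal.span_mono (Set.image_mono h)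

lemma Ie_mono (p : ℕ) {J₁ J₂ : Ideal R} (h : J₁ ≤ J₂) (e : ℕ) : Ie p J₁ e ≤ Ie p J₂ e :=
  sInf_le_sInf fun I hI => le_trans h hI

lemma bracketPow_eq_map (p : ℕ) [ExpChar R p] (J : Ideal R) (n : ℕ) :
    bracketPow J (p ^ n) = Ideal.map (iterateFrobenius R p n) J := by
  unfold bracketPow
  have : (fun x : R => x ^ p ^ n) = ⇑(iterateFrobenius R p n) :=
    funext fun x => (iterateFrobenius_def (p := p) (n := n) (x := x)).symm
  rw [this]
  rfl

lemma bracketPow_comp (p : ℕ) (hp : p.Prime) [CharP R p] (I : Ideal R) (e : ℕ) :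
    bracketPow (bracketPow I p) (p ^ e) = bracketPow I (p ^ (e + 1)) := by
  haveI : ExpChar R p := ExpChar.prime hp
  have h1 : bracketPow I p = bracketPow I (p ^ 1) := by rw [pow_one]
  rw [h1, bracketPow_eq_map p, bracketPow_eq_map p, bracketPow_eq_map p,
    Ideal.map_map, ← iterateFrobenius_add]

lemma Ie_succ (p : ℕ) (hp : p.Prime) [CharP R p] (hstar : CondStar R p) (b : Ideal R)
    {e : ℕ} (he : 1 ≤ e) : Ie p b (e + 1) = Ie p (Ie p b e) 1 := by
  unfold Ie
  congr 1
  ext I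
  simp only [Set.mem_setOf_eq, pow_one]
  constructor
  · intro h
    exact sInf_le (show b ≤ bracketPow (bracketPow I p) (p ^ e) from
      (bracketPow_comp p hp I e) ▸ h)
  · intro h
    calc b ≤ bracketPow (Ie p b e) (p ^ e) := hstar b e he
    _ ≤ bracketPow (bracketPow I p) (p ^ e) := bracketPow_mono h _
    _ = bracketPow I (p ^ (e + 1)) := bracketPow_comp p hp I e

lemma Ie_iSup (p : ℕ) (hstar : CondStar R p) {ι : Sort*} (J : ι → Ideal R) :
    Ie p (⨆ i, J i) 1 = ⨆ i, Ie p (J i) 1 := by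
  apply le_antisymm
  · apply sInf_le
    show (⨆ i, J i) ≤ bracketPow (⨆ i, Ie p (J i) 1) (p ^ 1)
    exact iSup_le fun i => le_trans (hstar (J i) 1 le_rfl)
      (bracketPow_mono (le_iSup (fun i => Ie p (J i) 1) i) _)
  · exact iSup_le fun i => Ie_mono p (le_iSup J i) 1

lemma iSup_one_split (f : ℕ → Ideal R) :
    (⨆ e : {e : ℕ // 1 ≤ e}, f (e : ℕ)) = f 1 ⊔ ⨆ e : {e : ℕ // 1 ≤ e}, f ((e : ℕ) + 1) := by
  apply le_antisymm
  · apply iSup_le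
    rintro ⟨e, he⟩
    match e, he with
    | 1, _ => exact le_sup_left
    | (n + 2), _ =>
      exact le_trans (le_iSup (fun e : {e : ℕ // 1 ≤ e} => f ((e : ℕ) + 1)) ⟨n + 1, by omega⟩)
        le_sup_right
  · apply sup_le
    · exact le_iSup (fun e : {e : ℕ // 1 ≤ e} => f (e : ℕ)) ⟨1, le_rfl⟩
    · exact iSup_le fun e => le_iSup (fun e : {e : ℕ // 1 ≤ e} => f (e : ℕ)) ⟨(e : ℕ) + 1, by omega⟩

lemma tau_eq (p : ℕ) (hp : p.Prime) [CharP R p] (hstar : CondStar R p) (a : Ideal R) (c : ℝ) :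
    tau p a c = Ie p (a ^ ⌈c * (p : ℝ)⌉₊) 1 ⊔ Ie p (tau p a ((p : ℝ) * c)) 1 := by
  unfold tau
  rw [iSup_one_split (fun n => Ie p (a ^ ⌈c * (p : ℝ) ^ n⌉₊) n)]
  rw [pow_one]
  congr 1
  have h1 : ∀ e : {e : ℕ // 1 ≤ e},
      Ie p (a ^ ⌈c * (p : ℝ) ^ ((e : ℕ) + 1)⌉₊) ((e : ℕ) + 1)
        = Ie p (Ie p (a ^ ⌈(p : ℝ) * c * (p : ℝ) ^ (e : ℕ)⌉₊) (e : ℕ)) 1 := by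
    intro e
    have harg : c * (p : ℝ) ^ ((e : ℕ) + 1) = (p : ℝ) * c * (p : ℝ) ^ (e : ℕ) := by
      rw [pow_succ]; ring
    rw [harg]
    exact Ie_succ p hp hstar _ e.2
  calc (⨆ e : {e : ℕ // 1 ≤ e}, Ie p (a ^ ⌈c * (p : ℝ) ^ ((e : ℕ) + 1)⌉₊) ((e : ℕ) + 1))
      = ⨆ e : {e : ℕ // 1 ≤ e}, Ie p (Ie p (a ^ ⌈(p : ℝ) * c * (p : ℝ) ^ (e : ℕ)⌉₊) (e : ℕ)) 1 :=
        iSup_congr h1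
    _ = Ie p (⨆ e : {e : ℕ // 1 ≤ e}, Ie p (a ^ ⌈(p : ℝ) * c * (p : ℝ) ^ (e : ℕ)⌉₊) (e : ℕ)) 1 :=
        (Ie_iSup p hstar _).symm

lemma tau_anti (p : ℕ) (hp : 0 < p) (a : Ideal R) {c c' : ℝ} (h : c' ≤ c) :
    tau p a c ≤ tau p a c' := by
  unfold tau
  apply iSup_mono
  intro e
  apply Ie_mono
  apply Ideal.pow_le_pow_right
  apply Nat.ceil_le_ceil
  have : (0:ℝ) ≤ (p : ℝ) ^ (e : ℕ) := by positivity
  exact mul_le_mul_of_nonneg_right h this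

end Aux

/-- If `c` is an F-jumping coefficient of `a`, then so is `pc`. -/
theorem stmt5 {R : Type*} [CommRing R] [IsNoetherianRing R] [IsLocalRing R]
    (p : ℕ) (hp : p.Prime) [CharP R p]
    (hreg : IsRegularStmt R) (hstar : CondStar R p) (a : Ideal R)
    (c : ℝ) (h : IsFJumpingCoeff p a c) :
    IsFJumpingCoeff p a ((p : ℝ) * c) := by
  obtain ⟨hc, hj⟩ := h
  have hp0 : (0 : ℝ) < p := by exact_mod_cast hp.pos
  refine ⟨by positivity, ?_⟩
  intro δ hδ hδc heq
  set N := ⌈c * (p : ℝ)⌉₊ with hNdef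
  have hcp : 0 < c * (p : ℝ) := by positivity
  have hN1 : 1 ≤ N := Nat.ceil_pos.mpr hcp
  have hη : (0 : ℝ) < c * (p : ℝ) - ((N : ℝ) - 1) := by
    have := Nat.ceil_lt_add_one hcp.le
    simp only [← hNdef] at this
    linarith
  set η := c * (p : ℝ) - ((N : ℝ) - 1) with hηdef
  set ε := min (δ / p) (min (c / 2) (η / (2 * p))) with hεdef
  have hε0 : 0 < ε := lt_min (by positivity) (lt_min (by positivity) (by positivity))
  have hεc : ε < c := lt_of_le_of_lt ((min_le_right _ _).trans (min_le_left _ _)) (by linarith)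
  have hεδ : ε * p ≤ δ := by
    have h1 : ε ≤ δ / p := min_le_left _ _
    calc ε * p ≤ (δ / p) * p := mul_le_mul_of_nonneg_right h1 hp0.le
      _ = δ := div_mul_cancel₀ δ (ne_of_gt hp0)
  have hεη : ε * p < η := by
    have h1 : ε ≤ η / (2 * p) := (min_le_right _ _).trans (min_le_right _ _)
    have h2 : ε * p ≤ (η / (2 * p)) * p := mul_le_mul_of_nonneg_right h1 hp0.le
    have h3 : (η / (2 * p)) * p = η / 2 := by field_simp
    linarith
  have hceil : ⌈(c - ε) * (p : ℝ)⌉₊ = N := by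
    apply le_antisymm
    · apply Nat.ceil_le_ceil
      nlinarith
    · have hlt : ((N - 1 : ℕ) : ℝ) < (c - ε) * (p : ℝ) := by
        rw [Nat.cast_sub hN1]
        push_cast
        nlinarith
      have := Nat.lt_ceil.mpr hlt
      omega
  have h1 : tau p a ((p : ℝ) * c - (p : ℝ) * ε) = tau p a ((p : ℝ) * c) := by
    apply le_antisymm
    · calc tau p a ((p : ℝ) * c - (p : ℝ) * ε)
          ≤ tau p a ((p : ℝ) * c - δ) := tau_anti p hp.pos a (by nlinarith)
        _ = tau p a ((p : ℝ) * c) := heq.symm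
    · exact tau_anti p hp.pos a (by nlinarith)
  have h2 := tau_eq p hp hstar a c
  have h3 := tau_eq p hp hstar a (c - ε)
  rw [hceil, show (p : ℝ) * (c - ε) = (p : ℝ) * c - (p : ℝ) * ε from by ring, h1] at h3
  exact hj ε hε0 hεc (h2.trans h3.symm)
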